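/- Let M ≥ 1 and let A and B be multisets of real numbers, each of cardinality M. If the power sums agree for all degrees 1 ≤ k ≤ M, i.e., ∑_{a ∈ A} a^k = ∑_{b ∈ B} b^k for every k = 1, …, M, then A = B as multisets. (This is the moment/power-sum injectivity lemma used in the proof of the Deep Sets theorem cited by the paper to handle fixed-size multisets of real inputs: the vector of the first M power sums uniquely determines a size-M multiset of reals.) -/

import Mathlib

open Polynomial Finset

lemma multiset_exists_fn (s : Multiset ℝ) :
    ∃ f : Fin s.toList.length → ℝ, s = Multiset.map f Finset.univ.val := by
  refine ⟨s.toList.get, ?_⟩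
  rw [Fin.univ_val_map]
  rw [show (Multiset.ofList (List.ofFn s.toList.get)) = Multiset.ofList s.toList by
    rw [List.ofFn_get]]
  exact (Multiset.coe_toList s).symm

/-- Newton's identity for multisets of reals. -/
lemma newton_multiset (s : Multiset ℝ) (k : ℕ) :
    (k : ℝ) * s.esymm k = (-1) ^ (k + 1) *
      ∑ a ∈ Finset.HasAntidiagonal.antidiagonal k with a.1 < k,
        (-1 : ℝ) ^ a.1 * s.esymm a.1 * (s.map (fun x => x ^ a.2)).sum := by
  obtain ⟨f, hf⟩ := multiset_exists_fn s
  have key := congrArg (MvPolynomial.aeval f) (MvPolynomial.mul_esymm_eq_sum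
    (Fin s.toList.length) ℝ k)
  simp only [map_mul, map_natCast, map_sum, map_pow, map_neg, map_one] at key
  have he : ∀ m, MvPolynomial.aeval f (MvPolynomial.esymm (Fin s.toList.length) ℝ m)
      = s.esymm m := by
    intro m
    rw [MvPolynomial.aeval_esymm_eq_multiset_esymm, ← hf]
  have hp : ∀ m, MvPolynomial.aeval f (MvPolynomial.psum (Fin s.toList.length) ℝ m)
      = (s.map (fun x => x ^ m)).sum := by
    intro m
    rw [MvPolynomial.psum, map_sum]
    simp only [map_pow, MvPolynomial.aeval_X]
    conv_rhs => rw [hf]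
    rw [Multiset.map_map]
    rfl
  simp only [he, hp] at key
  exact key

lemma esymm_eq_of_power_sums_eq (M : ℕ)
    (A B : Multiset ℝ) (hA : Multiset.card A = M) (hB : Multiset.card B = M)
    (h : ∀ k, 1 ≤ k → k ≤ M →
      (A.map (fun a => a ^ k)).sum = (B.map (fun b => b ^ k)).sum) :
    ∀ k, k ≤ M → A.esymm k = B.esymm k := by
  intro k
  induction k using Nat.strong_induction_on with
  | _ k ih =>
    intro hk
    rcases Nat.eq_zero_or_pos k with rfl | hk0
    · simp [Multiset.esymm]
    · have hA' := newton_multiset A k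
      have hB' := newton_multiset B k
      have hsum : ∑ a ∈ Finset.HasAntidiagonal.antidiagonal k with a.1 < k,
            (-1 : ℝ) ^ a.1 * A.esymm a.1 * (A.map (fun x => x ^ a.2)).sum
          = ∑ a ∈ Finset.HasAntidiagonal.antidiagonal k with a.1 < k,
            (-1 : ℝ) ^ a.1 * B.esymm a.1 * (B.map (fun x => x ^ a.2)).sum := by
        apply Finset.sum_congr rfl
        intro a ha
        simp only [Finset.mem_filter, Finset.HasAntidiagonal.mem_antidiagonal] at ha
        have h1 : a.1 < k := ha.2
        have h2 : 1 ≤ a.2 := by omega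
        have h3 : a.2 ≤ M := by omega
        rw [ih a.1 h1 (by omega), h a.2 h2 h3]
      have : (k : ℝ) * A.esymm k = (k : ℝ) * B.esymm k := by
        rw [hA', hB', hsum]
      have hk' : (k : ℝ) ≠ 0 := Nat.cast_ne_zero.mpr (by omega)
      exact mul_left_cancel₀ hk' this

/-- A multiset of `M ≥ 1` real numbers is uniquely determined by its first `M`
power sums. -/
theorem multiset_eq_of_power_sums_eq (M : ℕ) (hM : 1 ≤ M)
    (A B : Multiset ℝ) (hA : Multiset.card A = M) (hB : Multiset.card B = M)
    (h : ∀ k, 1 ≤ k → k ≤ M →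
      (A.map (fun a => a ^ k)).sum = (B.map (fun b => b ^ k)).sum) :
    A = B := by
  have hesymm := esymm_eq_of_power_sums_eq M A B hA hB h
  have hpoly : (A.map fun t => X - C t).prod = (B.map fun t => X - C t).prod := by
    rw [Multiset.prod_X_sub_X_eq_sum_esymm, Multiset.prod_X_sub_X_eq_sum_esymm, hA, hB]
    apply Finset.sum_congr rfl
    intro j hj
    rw [Finset.mem_range] at hj
    rw [hesymm j (by omega)]
  have := congrArg Polynomial.roots hpoly
  rwa [Polynomial.roots_multiset_prod_X_sub_C, Polynomial.roots_multiset_prod_X_sub_C] at this
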